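/- Let ψ₁,…,ψ_N be pairwise distinct reals and y ∈ ℝ. The matrix G with entries G_{ij} = σ(y+ψ_j)^i (for 1 ≤ i,j ≤ N), where σ is the sigmoid, is invertible. -/

import Mathlib

noncomputable def sigmoid : ℝ → ℝ := fun x => 1 / (1 + Real.exp (-x))

lemma sigmoid_pos (x : ℝ) : 0 < sigmoid x := by
  unfold sigmoid
  positivity

lemma sigmoid_inj : Function.Injective sigmoid := by
  intro a b h
  unfold sigmoid at h
  have ha : (0:ℝ) < 1 + Real.exp (-a) := by positivity
  have hb : (0:ℝ) < 1 + Real.exp (-b) := by positivity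
  field_simp at h
  have h2 := Real.exp_injective (by linarith : Real.exp (-a) = Real.exp (-b))
  linarith

theorem sigmoid_power_matrix_invertible {N : ℕ} (ψ : Fin N → ℝ)
    (hψ : Function.Injective ψ) (y : ℝ)
    (G : Matrix (Fin N) (Fin N) ℝ)
    (hG : ∀ i j, G i j = (sigmoid (y + ψ j)) ^ ((i : ℕ) + 1)) :
    IsUnit G := by
  set x : Fin N → ℝ := fun j => sigmoid (y + ψ j) with hx
  have hxinj : Function.Injective x := by
    intro a b h
    exact hψ (by linarith [sigmoid_inj h])
  have hGT : G.transpose = Matrix.diagonal x * Matrix.vandermonde x := by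
    ext j i
    simp [Matrix.transpose_apply, Matrix.mul_apply, Matrix.diagonal_apply,
      Matrix.vandermonde, hG, pow_succ, mul_comm, hx]
  have hdet : G.det ≠ 0 := by
    rw [← Matrix.det_transpose, hGT, Matrix.det_mul, Matrix.det_diagonal,
      Matrix.det_vandermonde]
    apply mul_ne_zero
    · exact Finset.prod_ne_zero_iff.mpr fun j _ => (sigmoid_pos _).ne'
    · apply Finset.prod_ne_zero_iff.mpr
      intro i _
      apply Finset.prod_ne_zero_iff.mpr
      intro j hj
      rw [Finset.mem_Ioi] at hj
      exact sub_ne_zero.mpr fun h => (ne_of_gt hj) (hxinj h.symm).symm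
  exact (Matrix.isUnit_iff_isUnit_det G).mpr (isUnit_iff_ne_zero.mpr hdet)
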